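/- arXiv:2505.04130 — 2 statements merged into one kernel-verified Lean document; each statement's English description precedes it below -/
import Mathlib

section
/- Let Γ be a countably infinite group and let ν be a Γ-invariant Borel probability measure on 2^(Γ×Γ) × 2^Γ (Γ acting diagonally, by the logic action on 2^(Γ×Γ) and by left translation on 2^Γ) such that for ν-almost every pair (L, S): L is a linear order on Γ without endpoints and S ⊆ Γ with the restriction of L is order-isomorphic to (ℤ, ≤). Then for ν-almost every (L, S), for all x, y ∈ S the interval {z ∈ Γ : x L z and z L y} is finite. -/
open MeasureTheory

/-- The logic action of `Γ` on binary relations on `Γ` (coded as points of `2^(Γ×Γ)`):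
`(γ·R)(x,y) ⇔ R(γ⁻¹x, γ⁻¹y)`. -/
def logicAct {Γ : Type*} [Group Γ] (γ : Γ) (R : Γ × Γ → Bool) : Γ × Γ → Bool :=
  fun q => R (γ⁻¹ * q.1, γ⁻¹ * q.2)

/-- `R` codes a linear order on `Γ` without endpoints. -/
def IsLinOrderNoEnd {Γ : Type*} (R : Γ × Γ → Bool) : Prop :=
  (∀ x, R (x, x) = true) ∧
  (∀ x y, R (x, y) = true → R (y, x) = true → x = y) ∧
  (∀ x y z, R (x, y) = true → R (y, z) = true → R (x, z) = true) ∧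
  (∀ x y, R (x, y) = true ∨ R (y, x) = true) ∧
  (∀ x, ∃ y, y ≠ x ∧ R (x, y) = true) ∧
  (∀ x, ∃ y, y ≠ x ∧ R (y, x) = true)

namespace Stmt14Aux

variable {Γ : Type*} [Group Γ]

/-- The event: `g ∈ S`, `h ∉ S`, `g ≤_L h`, and no point of `S` lies strictly between
`g` and `h` (i.e. `h` lies in the open gap of `S` just after `g`). -/
def evt (g h : Γ) : Set ((Γ × Γ → Bool) × (Γ → Bool)) :=
  {p | p.2 g = true ∧ p.1 (g, h) = true ∧ p.2 h = false ∧
    ∀ s : Γ, p.2 s = true → p.1 (g, s) = true → p.1 (s, h) = true → s = g}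

lemma meas_snd (a : Γ) (b : Bool) :
    MeasurableSet {p : (Γ × Γ → Bool) × (Γ → Bool) | p.2 a = b} := by
  have : Measurable fun p : (Γ × Γ → Bool) × (Γ → Bool) => p.2 a :=
    (measurable_pi_apply a).comp measurable_snd
  exact this (measurableSet_singleton b)

lemma meas_fst (q : Γ × Γ) (b : Bool) :
    MeasurableSet {p : (Γ × Γ → Bool) × (Γ → Bool) | p.1 q = b} := by
  have : Measurable fun p : (Γ × Γ → Bool) × (Γ → Bool) => p.1 q :=
    (measurable_pi_apply q).comp measurable_fst
  exact this (measurableSet_singleton b)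

lemma measurable_evt (g h : Γ) [Countable Γ] : MeasurableSet (evt g h) := by
  have hrw : evt g h =
      ({p : (Γ × Γ → Bool) × (Γ → Bool) | p.2 g = true} ∩
        ({p | p.1 (g, h) = true} ∩ ({p | p.2 h = false} ∩
          ⋂ s : Γ, {p : (Γ × Γ → Bool) × (Γ → Bool) |
            p.2 s = true → p.1 (g, s) = true → p.1 (s, h) = true → s = g}))) := by
    ext p
    simp only [evt, Set.mem_inter_iff, Set.mem_iInter, Set.mem_setOf_eq]
  rw [hrw]
  refine (meas_snd g true).inter ((meas_fst (g, h) true).inter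
    ((meas_snd h false).inter (MeasurableSet.iInter fun s => ?_)))
  by_cases hs : s = g
  · have : {p : (Γ × Γ → Bool) × (Γ → Bool) |
        p.2 s = true → p.1 (g, s) = true → p.1 (s, h) = true → s = g} = Set.univ := by
      ext p; simp only [Set.mem_setOf_eq, Set.mem_univ, iff_true]; intros; exact hs
    rw [this]; exact MeasurableSet.univ
  · have : {p : (Γ × Γ → Bool) × (Γ → Bool) |
        p.2 s = true → p.1 (g, s) = true → p.1 (s, h) = true → s = g} =
        ({p | p.2 s = true} ∩ ({p | p.1 (g, s) = true} ∩ {p | p.1 (s, h) = true}))ᶜ := by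
      ext p
      simp only [Set.mem_setOf_eq, Set.mem_compl_iff, Set.mem_inter_iff]
      tauto
    rw [this]
    exact ((meas_snd s true).inter ((meas_fst (g, s) true).inter (meas_fst (s, h) true))).compl

/-- The diagonal action. -/
def act (γ : Γ) (p : (Γ × Γ → Bool) × (Γ → Bool)) : (Γ × Γ → Bool) × (Γ → Bool) :=
  (logicAct γ p.1, fun a => p.2 (γ⁻¹ * a))

lemma measurable_act (γ : Γ) : Measurable (act (Γ := Γ) γ) := by
  have h1 : Measurable fun p : (Γ × Γ → Bool) × (Γ → Bool) => logicAct γ p.1 :=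
    measurable_pi_lambda _ fun q =>
      (measurable_pi_apply ((γ⁻¹ * q.1, γ⁻¹ * q.2) : Γ × Γ)).comp measurable_fst
  have h2 : Measurable fun p : (Γ × Γ → Bool) × (Γ → Bool) => fun a => p.2 (γ⁻¹ * a) :=
    measurable_pi_lambda _ fun a =>
      (measurable_pi_apply (γ⁻¹ * a)).comp measurable_snd
  exact h1.prodMk h2

lemma act_preimage (γ g h : Γ) :
    act γ ⁻¹' evt (γ * g) (γ * h) = evt g h := by
  ext p
  simp only [Set.mem_preimage, evt, act, logicAct, Set.mem_setOf_eq,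
    inv_mul_cancel_left]
  constructor
  · rintro ⟨h1, h2, h3, h4⟩
    refine ⟨h1, h2, h3, fun s hs1 hs2 hs3 => ?_⟩
    have := h4 (γ * s) (by simpa using hs1) (by simpa using hs2) (by simpa using hs3)
    exact mul_left_cancel this
  · rintro ⟨h1, h2, h3, h4⟩
    refine ⟨h1, h2, h3, fun s hs1 hs2 hs3 => ?_⟩
    have := h4 (γ⁻¹ * s) hs1 hs2 hs3
    have : s = γ * g := by rw [← this]; simp
    exact this

end Stmt14Aux

open Stmt14Aux in
/-- If `ν` is a Γ-invariant probability measure on pairs `(L, S)` where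
`L` is almost surely a linear order on `Γ` without endpoints and `S` is almost surely a
subset of order type `ℤ`, then almost surely every interval between two points of `S`
is finite. -/
theorem stmt_14 {Γ : Type*} [Group Γ] [Countable Γ] [Infinite Γ]
    (ν : Measure ((Γ × Γ → Bool) × (Γ → Bool))) [IsProbabilityMeasure ν]
    (hinv : ∀ γ : Γ, Measure.map
      (fun p : (Γ × Γ → Bool) × (Γ → Bool) =>
        (logicAct γ p.1, fun a => p.2 (γ⁻¹ * a))) ν = ν)
    (hae : ∀ᵐ p ∂ν, IsLinOrderNoEnd p.1 ∧
      ∃ e : ℤ → Γ,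
        (∀ n : ℤ, p.2 (e n) = true) ∧
        (∀ a : Γ, p.2 a = true → ∃ n : ℤ, e n = a) ∧
        (∀ m n : ℤ, m ≤ n ↔ p.1 (e m, e n) = true)) :
    ∀ᵐ p ∂ν, ∀ x y : Γ, p.2 x = true → p.2 y = true →
      {z : Γ | p.1 (x, z) = true ∧ p.1 (z, y) = true}.Finite := by
  classical
  -- invariance of the events `evt`
  have einv : ∀ (γ g h : Γ), ν (evt (γ * g) (γ * h)) = ν (evt g h) := by
    intro γ g h
    calc ν (evt (γ * g) (γ * h))
        = (Measure.map (act γ) ν) (evt (γ * g) (γ * h)) := by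
          rw [show Measure.map (act γ) ν = ν from hinv γ]
      _ = ν (act γ ⁻¹' evt (γ * g) (γ * h)) :=
          Measure.map_apply (measurable_act γ) (measurable_evt _ _)
      _ = ν (evt g h) := by rw [act_preimage]
  -- a measurable conull set on which the a.e. hypothesis holds
  set Q : ((Γ × Γ → Bool) × (Γ → Bool)) → Prop := fun p =>
    IsLinOrderNoEnd p.1 ∧
      ∃ e : ℤ → Γ,
        (∀ n : ℤ, p.2 (e n) = true) ∧
        (∀ a : Γ, p.2 a = true → ∃ n : ℤ, e n = a) ∧
        (∀ m n : ℤ, m ≤ n ↔ p.1 (e m, e n) = true) with hQ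
  have h0 : ν {p | ¬ Q p} = 0 := hae
  obtain ⟨M, hMsub, hMmeas, hM0⟩ := exists_measurable_superset_of_null h0
  set G : Set ((Γ × Γ → Bool) × (Γ → Bool)) := Mᶜ with hG
  have hGmeas : MeasurableSet G := hMmeas.compl
  have hGc : ν Gᶜ = 0 := by simpa [hG] using hM0
  have hGQ : ∀ p ∈ G, Q p := by
    intro p hp
    by_contra hc
    exact hp (hMsub hc)
  -- disjointness of the events `evt g 1 ∩ G` over `g`
  have hdisj : Pairwise (Function.onFun Disjoint fun g : Γ => evt g 1 ∩ G) := by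
    intro g1 g2 hne
    rw [Function.onFun, Set.disjoint_left]
    rintro p ⟨hp1, hpG⟩ ⟨hp2, -⟩
    obtain ⟨hlin, -⟩ := hGQ p hpG
    obtain ⟨-, -, -, htot, -, -⟩ := hlin
    obtain ⟨ha1, hb1, -, hc1⟩ := hp1
    obtain ⟨ha2, hb2, -, hc2⟩ := hp2
    rcases htot g1 g2 with hle | hle
    · exact hne ((hc1 g2 ha2 hle hb2).symm)
    · exact hne (hc2 g1 ha1 hle hb1)
  -- total mass bound
  have hsum1 : ∑' g : Γ, ν (evt g (1 : Γ)) ≤ 1 := by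
    have heq : ∀ g : Γ, ν (evt g (1 : Γ)) = ν (evt g 1 ∩ G) := fun g =>
      (measure_inter_conull hGc).symm
    calc ∑' g : Γ, ν (evt g (1 : Γ)) = ∑' g : Γ, ν (evt g 1 ∩ G) := by
          exact tsum_congr heq
      _ = ν (⋃ g : Γ, evt g 1 ∩ G) :=
          (measure_iUnion hdisj fun g => (measurable_evt g 1).inter hGmeas).symm
      _ ≤ ν Set.univ := measure_mono (Set.subset_univ _)
      _ = 1 := measure_univ
  -- reindexing: each row sum equals the column sum
  have hrow : ∀ g : Γ, ∑' h : Γ, ν (evt g h) ≤ 1 := by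
    intro g
    have h1 : ∀ h : Γ, ν (evt g h) = ν (evt 1 (g⁻¹ * h)) := by
      intro h
      have := einv g⁻¹ g h
      simpa using this.symm
    have h2 : ∑' h : Γ, ν (evt (1 : Γ) (g⁻¹ * h)) = ∑' k : Γ, ν (evt (1 : Γ) k) :=
      (Equiv.mulLeft g⁻¹).tsum_eq fun k => ν (evt (1 : Γ) k)
    have h3 : ∀ g' : Γ, ν (evt g' (1 : Γ)) = ν (evt (1 : Γ) g'⁻¹) := by
      intro g'
      have := einv g'⁻¹ g' 1
      simpa using this.symm
    have h4 : ∑' g' : Γ, ν (evt (1 : Γ) g'⁻¹) = ∑' k : Γ, ν (evt (1 : Γ) k) :=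
      (Equiv.inv Γ).tsum_eq fun k => ν (evt (1 : Γ) k)
    calc ∑' h : Γ, ν (evt g h) = ∑' k : Γ, ν (evt (1 : Γ) k) := by
          rw [tsum_congr h1]; exact h2
      _ = ∑' g' : Γ, ν (evt g' (1 : Γ)) := by rw [← h4, tsum_congr h3]
      _ ≤ 1 := hsum1
  -- a.e. each gap is finite
  have hgap : ∀ g : Γ, ∀ᵐ p ∂ν, {h : Γ | p ∈ evt g h}.Finite := by
    intro g
    set F : ((Γ × Γ → Bool) × (Γ → Bool)) → ENNReal := fun p =>
      ∑' h : Γ, (evt g h).indicator (fun _ => (1 : ENNReal)) p with hF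
    have hFmeas : Measurable F :=
      Measurable.ennreal_tsum fun h => measurable_const.indicator (measurable_evt g h)
    have hFint : ∫⁻ p, F p ∂ν ≤ 1 := by
      rw [hF]
      rw [lintegral_tsum fun h =>
        (measurable_const.indicator (measurable_evt g h)).aemeasurable]
      calc ∑' h : Γ, ∫⁻ p, (evt g h).indicator (fun _ => (1 : ENNReal)) p ∂ν
          = ∑' h : Γ, ν (evt g h) := by
            refine tsum_congr fun h => ?_
            exact lintegral_indicator_one (μ := ν) (measurable_evt g h)
        _ ≤ 1 := hrow g
    have hlt : ∀ᵐ p ∂ν, F p < ⊤ :=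
      ae_lt_top hFmeas (lt_of_le_of_lt hFint (by norm_num)).ne
    filter_upwards [hlt] with p hp
    have hfin := ENNReal.finite_const_le_of_tsum_ne_top (a := fun h : Γ =>
      (evt g h).indicator (fun _ => (1 : ENNReal)) p) hp.ne (ε := 1) one_ne_zero
    refine hfin.subset ?_
    intro h hh
    simp only [Set.mem_setOf_eq] at hh ⊢
    rw [Set.indicator_of_mem hh]
  have hgapAll : ∀ᵐ p ∂ν, ∀ g : Γ, {h : Γ | p ∈ evt g h}.Finite :=
    (ae_all_iff).mpr hgap
  -- conclude pointwise
  filter_upwards [hae, hgapAll] with p hp hfin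
  obtain ⟨hlin, e, he1, he2, he3⟩ := hp
  obtain ⟨hrefl, hanti, htrans, htot, -, -⟩ := hlin
  have einj : Function.Injective e := by
    intro i j hij
    have h1 : i ≤ j := (he3 i j).mpr (by rw [hij]; exact hrefl _)
    have h2 : j ≤ i := (he3 j i).mpr (by rw [hij]; exact hrefl _)
    omega
  intro x y hx hy
  obtain ⟨m, hm⟩ := he2 x hx
  obtain ⟨n, hn⟩ := he2 y hy
  have hcover : {z : Γ | p.1 (x, z) = true ∧ p.1 (z, y) = true} ⊆
      ⋃ k ∈ Finset.Icc m n, ({e k} ∪ {h : Γ | p ∈ evt (e k) h}) := by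
    rintro z ⟨hxz, hzy⟩
    have hmn : m ≤ n := (he3 m n).mpr (by rw [hm, hn]; exact htrans _ _ _ hxz hzy)
    by_cases hzS : p.2 z = true
    · obtain ⟨j, hj⟩ := he2 z hzS
      have hj1 : m ≤ j := (he3 m j).mpr (by rw [hm, hj]; exact hxz)
      have hj2 : j ≤ n := (he3 j n).mpr (by rw [hj, hn]; exact hzy)
      have hjIcc : j ∈ Finset.Icc m n := by rw [Finset.mem_Icc]; omega
      refine Set.mem_biUnion hjIcc ?_
      exact Or.inl (by simp [hj])
    · -- z ∉ S : find the greatest k with e k ≤ z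
      have hzS' : p.2 z = false := by
        cases hzb : p.2 z with
        | false => rfl
        | true => exact absurd hzb hzS
      set K : Finset ℤ := (Finset.Icc m n).filter (fun k => p.1 (e k, z) = true) with hK
      have hmK : m ∈ K := by
        simp only [hK, Finset.mem_filter, Finset.mem_Icc]
        exact ⟨⟨le_refl m, hmn⟩, by rw [hm]; exact hxz⟩
      have hKne : K.Nonempty := ⟨m, hmK⟩
      set k := K.max' hKne with hk
      have hkK : k ∈ K := K.max'_mem hKne
      obtain ⟨hkIcc, hkz⟩ := Finset.mem_filter.mp hkK
      obtain ⟨hmk, hkn⟩ := Finset.mem_Icc.mp hkIcc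
      have hkltn : k < n := by
        rcases lt_or_eq_of_le hkn with h | h
        · exact h
        · exfalso
          have : z = e n := hanti z (e n) (by rw [hn]; exact hzy) (by rw [← h]; exact hkz)
          rw [this] at hzS
          exact hzS (he1 n)
      have hnot : ¬ (p.1 (e (k + 1), z) = true) := by
        intro hc
        have : (k + 1) ∈ K := by
          simp only [hK, Finset.mem_filter, Finset.mem_Icc]
          exact ⟨⟨by omega, by omega⟩, hc⟩
        have := K.le_max' _ this
        omega
      have hmem : p ∈ evt (e k) z := by
        refine ⟨he1 k, hkz, hzS', ?_⟩
        intro s hs1 hs2 hs3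
        obtain ⟨j, hj⟩ := he2 s hs1
        have hkj : k ≤ j := (he3 k j).mpr (by rw [hj]; exact hs2)
        rcases lt_or_eq_of_le hkj with h | h
        · exfalso
          have hk1j : k + 1 ≤ j := by omega
          have : p.1 (e (k + 1), e j) = true := (he3 (k + 1) j).mp hk1j
          exact hnot (htrans _ _ _ this (by rw [hj]; exact hs3))
        · rw [← hj, ← h]
      have hkIcc' : k ∈ Finset.Icc m n := by rw [Finset.mem_Icc]; omega
      refine Set.mem_biUnion hkIcc' ?_
      exact Or.inr hmem
  refine Set.Finite.subset ?_ hcover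
  refine Set.Finite.biUnion (Finset.Icc m n).finite_toSet fun k _ => ?_
  exact (Set.finite_singleton _).union (hfin (e k))
end

section
/- Let Γ be a countably infinite group and let μ be a symmetric probability measure on Γ (μ({γ}) = μ({γ⁻¹}) for all γ) whose support generates Γ. Define the two-sided random walk started at the identity e as the map Γ^ℕ × Γ^ℕ → Γ^ℤ sending (ξ, η) to (Z_n)_{n∈ℤ} where Z_0 = e, Z_{n+1} = Z_n·ξ_n for n ≥ 0, and Z_{-(n+1)} = Z_{-n}·η_n for n ≥ 0; let P̂ be the pushforward of the product measure μ^ℕ × μ^ℕ under this map. Let ER(Γ) ⊆ 2^(Γ×Γ) be the set of equivalence relations on Γ, let ν be a Γ-invariant Borel probability measure on ER(Γ), and let λ = ν × P̂ on ER(Γ) × Γ^ℤ, where Γ acts diagonally (by the logic action on ER(Γ) and coordinatewise by left multiplication on Γ^ℤ). Let S : ER(Γ) × Γ^ℤ → ER(Γ) × Γ^ℤ be the shift S(E, (Z_n)_{n∈ℤ}) = (E, (Z_{n+1})_{n∈ℤ}). Then λ(S(A)) = λ(A) for every Γ-invariant Borel set A ⊆ ER(Γ) × Γ^ℤ. -/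
open MeasureTheory

/-- `R` codes an equivalence relation on `Γ`. -/
def IsEquivRel {Γ : Type*} (R : Γ × Γ → Bool) : Prop :=
  (∀ x, R (x, x) = true) ∧
  (∀ x y, R (x, y) = true → R (y, x) = true) ∧
  (∀ x y z, R (x, y) = true → R (y, z) = true → R (x, z) = true)

/-- Partial products of an increment sequence: `fwd ξ 0 = 1`,
`fwd ξ (n+1) = fwd ξ n * ξ n`. -/
def fwd {Γ : Type*} [Group Γ] (ξ : ℕ → Γ) : ℕ → Γ
  | 0 => 1
  | n + 1 => fwd ξ n * ξ n

/-- The two-sided random walk started at the identity with forward increments `ξ`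
and backward increments `η`: `Z_0 = 1`, `Z_{n+1} = Z_n · ξ_n`,
`Z_{-(n+1)} = Z_{-n} · η_n`. -/
def twoSided {Γ : Type*} [Group Γ] (ξ η : ℕ → Γ) (n : ℤ) : Γ :=
  if 0 ≤ n then fwd ξ n.toNat else fwd η (-n).toNat

section Helpers
variable {Γ : Type*} [Group Γ] [Countable Γ] [MeasurableSpace Γ] [MeasurableSingletonClass Γ]

/-- prepend an element to a sequence -/
def cons19 {Γ : Type*} (γ : Γ) (ξ : ℕ → Γ) : ℕ → Γ := fun n => Nat.casesOn n γ ξ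

/-- cylinder sets -/
def cyl19 {Γ : Type*} (F : Finset ℕ) (f : ℕ → Γ) : Set (ℕ → Γ) := {ξ | ∀ n ∈ F, ξ n = f n}

def cylSet19 (Γ : Type*) : Set (Set (ℕ → Γ)) := {S | ∃ F f, S = cyl19 F f}

lemma meas_mul19 {α : Type*} [MeasurableSpace α] {f g : α → Γ} (hf : Measurable f)
    (hg : Measurable g) : Measurable (fun a => f a * g a) :=
  (measurable_of_countable (fun q : Γ × Γ => q.1 * q.2)).comp (hf.prodMk hg)

lemma measurable_fwd19 (m : ℕ) : Measurable (fun ξ : ℕ → Γ => fwd ξ m) := by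
  induction m with
  | zero => exact measurable_const
  | succ n ih => exact meas_mul19 ih (measurable_pi_apply n)

lemma measurable_cons19 (γ : Γ) : Measurable (cons19 γ : (ℕ → Γ) → (ℕ → Γ)) := by
  apply measurable_pi_lambda
  intro n
  cases n with
  | zero => exact measurable_const
  | succ m => exact measurable_pi_apply m

lemma measurable_logicAct (γ : Γ) : Measurable (logicAct γ) := by
  apply measurable_pi_lambda
  intro q
  exact measurable_pi_apply _

lemma measurable_param19 {α β : Type*} [MeasurableSpace α] [MeasurableSpace β]
    (c : α → Γ) (hc : Measurable c) (G : Γ → α → β) (hG : ∀ g, Measurable (G g)) :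
    Measurable (fun a => G (c a) a) := by
  intro S hS
  have : (fun a => G (c a) a) ⁻¹' S = ⋃ g : Γ, c ⁻¹' {g} ∩ (G g) ⁻¹' S := by
    ext a
    simp only [Set.mem_iUnion, Set.mem_inter_iff, Set.mem_preimage, Set.mem_singleton_iff]
    exact ⟨fun h => ⟨c a, rfl, h⟩, by rintro ⟨g, rfl, h⟩; exact h⟩
  rw [this]
  exact MeasurableSet.iUnion fun g => (hc (measurableSet_singleton g)).inter (hG g hS)

lemma measurableSet_cyl19 (F : Finset ℕ) (f : ℕ → Γ) : MeasurableSet (cyl19 F f) := by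
  have : cyl19 F f = ⋂ n ∈ (F : Set ℕ), (fun ξ : ℕ → Γ => ξ n) ⁻¹' {f n} := by
    ext ξ; simp [cyl19]
  rw [this]
  exact MeasurableSet.biInter (F : Set ℕ).to_countable
    (fun n _ => measurable_pi_apply n (measurableSet_singleton (f n)))

lemma isPiSystem_cyl19 : IsPiSystem (cylSet19 Γ) := by
  rintro _ ⟨F, f, rfl⟩ _ ⟨G, g, rfl⟩ hne
  obtain ⟨ξ0, hξF, hξG⟩ := hne
  classical
  refine ⟨F ∪ G, fun n => if n ∈ F then f n else g n, ?_⟩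
  ext ξ
  simp only [cyl19, Set.mem_inter_iff, Set.mem_setOf_eq, Finset.mem_union]
  constructor
  · rintro ⟨h1, h2⟩ n hn
    by_cases hF : n ∈ F
    · simp [hF, h1 n hF]
    · simp [hF, h2 n (hn.resolve_left hF)]
  · intro h
    constructor
    · intro n hn
      have := h n (Or.inl hn); simpa [hn] using this
    · intro n hn
      have := h n (Or.inr hn)
      by_cases hF : n ∈ F
      · have hfg : f n = g n := by rw [← hξF n hF, hξG n hn]
        rw [← hfg]; simpa [hF] using this
      · simpa [hF] using this

lemma isCountablySpanning_cyl19 : IsCountablySpanning (cylSet19 Γ) :=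
  ⟨fun _ => Set.univ, fun _ => ⟨∅, fun _ => 1, by ext ξ; simp [cyl19]⟩, Set.iUnion_const _⟩

lemma generateFrom_cyl19 :
    MeasurableSpace.generateFrom (cylSet19 Γ) = (inferInstance : MeasurableSpace (ℕ → Γ)) := by
  apply le_antisymm
  · apply MeasurableSpace.generateFrom_le
    rintro _ ⟨F, f, rfl⟩
    exact measurableSet_cyl19 F f
  · rw [show (inferInstance : MeasurableSpace (ℕ → Γ)) = MeasurableSpace.pi from rfl,
      MeasurableSpace.pi]
    refine iSup_le fun n => ?_
    rintro t ⟨S, -, rfl⟩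
    have : (fun ξ : ℕ → Γ => ξ n) ⁻¹' S = ⋃ g ∈ S, cyl19 {n} (fun _ => g) := by
      ext ξ; simp [cyl19]
    rw [this]
    exact MeasurableSet.biUnion S.to_countable
      (fun g _ => MeasurableSpace.measurableSet_generateFrom ⟨{n}, fun _ => g, rfl⟩)

lemma fwd_cons19 (γ : Γ) (ξ : ℕ → Γ) : ∀ m, fwd (cons19 γ ξ) (m + 1) = γ * fwd ξ m
  | 0 => by simp [fwd, cons19]
  | m + 1 => by
    show fwd (cons19 γ ξ) (m + 1) * (cons19 γ ξ) (m + 1) = γ * (fwd ξ m * ξ m)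
    rw [fwd_cons19 γ ξ m]; simp [cons19, mul_assoc]

lemma fwd_tail19 (η : ℕ → Γ) : ∀ m, (η 0)⁻¹ * fwd η (m + 1) = fwd (fun n => η (n + 1)) m
  | 0 => by simp [fwd]
  | m + 1 => by
    show (η 0)⁻¹ * (fwd η (m + 1) * η (m + 1)) = fwd (fun n => η (n + 1)) m * η (m + 1)
    rw [← mul_assoc, fwd_tail19 η m]

lemma twoSided_shift19 (ξ η : ℕ → Γ) (n : ℤ) :
    (η 0)⁻¹ * twoSided ξ η (n - 1) = twoSided (cons19 (η 0)⁻¹ ξ) (fun k => η (k + 1)) n := by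
  match n with
  | Int.ofNat 0 =>
      show (η 0)⁻¹ * twoSided ξ η (-1) = twoSided _ _ 0
      have h1 : twoSided ξ η (-1) = fwd η 1 := by simp [twoSided]
      have h2 : twoSided (cons19 (η 0)⁻¹ ξ) (fun k => η (k + 1)) 0 = 1 := by simp [twoSided, fwd]
      rw [h1, h2]; simp [fwd]
  | Int.ofNat (m + 1) =>
      simp only [Int.ofNat_eq_coe]
      have h1 : ((m + 1 : ℕ) : ℤ) - 1 = (m : ℤ) := by omega
      rw [h1]
      have h2 : twoSided ξ η (m : ℤ) = fwd ξ m := by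
        rw [twoSided, if_pos (by exact_mod_cast Nat.zero_le m)]
        congr 1
      have h3 : twoSided (cons19 (η 0)⁻¹ ξ) (fun k => η (k + 1)) ((m + 1 : ℕ) : ℤ)
          = fwd (cons19 (η 0)⁻¹ ξ) (m + 1) := by
        rw [twoSided, if_pos (by exact_mod_cast Nat.zero_le (m+1))]
        congr 1
      rw [h2, h3, fwd_cons19]
  | Int.negSucc m =>
      have h1 : (Int.negSucc m) - 1 = Int.negSucc (m + 1) := Int.negSucc_sub_one m
      rw [h1]
      have h2 : twoSided ξ η (Int.negSucc (m + 1)) = fwd η (m + 2) := by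
        simp [twoSided]
        rfl
      have h3 : twoSided (cons19 (η 0)⁻¹ ξ) (fun k => η (k + 1)) (Int.negSucc m)
          = fwd (fun k => η (k + 1)) (m + 1) := by
        simp [twoSided]
      rw [h2, h3, ← fwd_tail19]

end Helpers

/-- With `λ = ν × P̂` (for `P̂` the law of the two-sided `μ`-random walk
started at the identity and `ν` a Γ-invariant random equivalence relation), the shift
`S(E, (Z_n)) = (E, (Z_{n+1}))` preserves the measure of every Γ-invariant Borel set. -/
theorem stmt_19 {Γ : Type*} [Group Γ] [Countable Γ] [Infinite Γ]
    [MeasurableSpace Γ] [MeasurableSingletonClass Γ]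
    (μ : Measure Γ) [IsProbabilityMeasure μ]
    (hsym : ∀ γ : Γ, μ {γ} = μ {γ⁻¹})
    (hgen : Subgroup.closure {γ : Γ | μ {γ} ≠ 0} = ⊤)
    (κ : Measure (ℕ → Γ)) [IsProbabilityMeasure κ]
    (hκ : ∀ (F : Finset ℕ) (f : ℕ → Γ),
      κ {ξ | ∀ n ∈ F, ξ n = f n} = ∏ n ∈ F, μ {f n})
    (ν : Measure (Γ × Γ → Bool)) [IsProbabilityMeasure ν]
    (hν : ∀ γ : Γ, Measure.map (logicAct γ) ν = ν)
    (hER : ν {R | IsEquivRel R} = 1) :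
    ∀ A : Set ((Γ × Γ → Bool) × (ℤ → Γ)), MeasurableSet A →
      (∀ γ : Γ, (fun p : (Γ × Γ → Bool) × (ℤ → Γ) =>
        (logicAct γ p.1, fun n => γ * p.2 n)) ⁻¹' A = A) →
      (ν.prod (Measure.map (fun q : (ℕ → Γ) × (ℕ → Γ) => twoSided q.1 q.2) (κ.prod κ)))
          ((fun p : (Γ × Γ → Bool) × (ℤ → Γ) => (p.1, fun n => p.2 (n + 1))) '' A)
        = (ν.prod (Measure.map (fun q : (ℕ → Γ) × (ℕ → Γ) => twoSided q.1 q.2)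
            (κ.prod κ))) A := by
  classical
  intro A hA hinv
  have hκ' : ∀ (F : Finset ℕ) (f : ℕ → Γ), κ (cyl19 F f) = ∏ n ∈ F, μ {f n} := hκ
  set T : (ℕ → Γ) × (ℕ → Γ) → (ℤ → Γ) := fun q => twoSided q.1 q.2 with hTdef
  have hT : Measurable T := by
    apply measurable_pi_lambda
    intro n
    by_cases hn : 0 ≤ n
    · have he : (fun q : (ℕ → Γ) × (ℕ → Γ) => T q n) = fun q => fwd q.1 n.toNat := by
        funext q; simp [hTdef, twoSided, hn]
      rw [he]; exact (measurable_fwd19 _).comp measurable_fst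
    · have he : (fun q : (ℕ → Γ) × (ℕ → Γ) => T q n) = fun q => fwd q.2 (-n).toNat := by
        funext q; simp [hTdef, twoSided, hn]
      rw [he]; exact (measurable_fwd19 _).comp measurable_snd
  set m2 := κ.prod κ with hm2
  set Λ := ν.prod m2 with hΛ
  have hmeas_eq : ν.prod (Measure.map T m2) = Measure.map (Prod.map id T) Λ := by
    rw [hΛ, ← Measure.map_prod_map _ _ measurable_id hT, Measure.map_id]
  have himg : (fun p : (Γ × Γ → Bool) × (ℤ → Γ) => (p.1, fun n => p.2 (n + 1))) '' A
      = (fun p : (Γ × Γ → Bool) × (ℤ → Γ) => (p.1, fun n : ℤ => p.2 (n - 1))) ⁻¹' A := by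
    ext p
    constructor
    · rintro ⟨a, ha, rfl⟩
      have he : (fun n : ℤ => a.2 (n + 1 - 1)) = a.2 := by
        funext n
        rw [show (n : ℤ) + 1 - 1 = n from by ring]
      simpa [he] using ha
    · intro hp
      refine ⟨(p.1, fun n : ℤ => p.2 (n - 1)), hp, ?_⟩
      have he : (fun n : ℤ => p.2 (n - 1 + 1)) = p.2 := by
        funext n
        rw [show (n : ℤ) - 1 + 1 = n from by ring]
      simp [he]
  have hShInv : Measurable
      (fun p : (Γ × Γ → Bool) × (ℤ → Γ) => (p.1, fun n : ℤ => p.2 (n - 1))) :=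
    measurable_fst.prodMk (measurable_pi_lambda _ fun n =>
      (measurable_pi_apply (n - 1)).comp measurable_snd)
  set Ψ : (Γ × Γ → Bool) × ((ℕ → Γ) × (ℕ → Γ)) → (Γ × Γ → Bool) × ((ℕ → Γ) × (ℕ → Γ)) :=
    fun p => (logicAct (p.2.2 0)⁻¹ p.1,
      (cons19 (p.2.2 0)⁻¹ p.2.1, fun n => p.2.2 (n + 1))) with hΨdef
  have hΨ : Measurable Ψ := by
    apply measurable_param19 (fun p : (Γ × Γ → Bool) × ((ℕ → Γ) × (ℕ → Γ)) => p.2.2 0)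
      ((measurable_pi_apply 0).comp (measurable_snd.comp measurable_snd))
      (fun g p => (logicAct g⁻¹ p.1, (cons19 g⁻¹ p.2.1, fun n => p.2.2 (n + 1))))
    intro g
    refine ((measurable_logicAct g⁻¹).comp measurable_fst).prodMk ?_
    refine ((measurable_cons19 g⁻¹).comp (measurable_fst.comp measurable_snd)).prodMk ?_
    exact measurable_pi_lambda _ fun n =>
      (measurable_pi_apply (n + 1)).comp (measurable_snd.comp measurable_snd)
  -- the key measure-preservation of Ψ
  have htsum1 : ∑' g : Γ, μ {g} = 1 := by
    have hu : (Set.univ : Set Γ) = ⋃ g : Γ, {g} := (Set.iUnion_of_singleton Γ).symm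
    have := measure_iUnion (μ := μ) (f := fun g : Γ => ({g} : Set Γ))
      (fun i j hij => Set.disjoint_singleton.mpr hij) (fun g => measurableSet_singleton g)
    rw [← this, ← hu, measure_univ]
  have hmapΨ : Measure.map Ψ Λ = Λ := by
    have hPM2 : IsProbabilityMeasure (Measure.map Ψ Λ) :=
      Measure.isProbabilityMeasure_map hΨ.aemeasurable
    refine ext_of_generate_finite
      (Set.image2 (· ×ˢ ·) {s : Set (Γ × Γ → Bool) | MeasurableSet s}
        (Set.image2 (· ×ˢ ·) (cylSet19 Γ) (cylSet19 Γ)))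
      ?_ ?_ ?_ (by simp)
    · exact (generateFrom_eq_prod MeasurableSpace.generateFrom_measurableSet
        (generateFrom_eq_prod generateFrom_cyl19 generateFrom_cyl19
          isCountablySpanning_cyl19 isCountablySpanning_cyl19)
        isCountablySpanning_measurableSet
        (isCountablySpanning_cyl19.prod isCountablySpanning_cyl19)).symm
    · exact MeasurableSpace.isPiSystem_measurableSet.prod (isPiSystem_cyl19.prod isPiSystem_cyl19)
    rintro s hs
    rw [Set.mem_image2] at hs
    obtain ⟨R, hR, S, hS, rfl⟩ := hs
    rw [Set.mem_image2] at hS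
    obtain ⟨C1, hC1, C2, hC2, rfl⟩ := hS
    obtain ⟨F, f, rfl⟩ := hC1
    obtain ⟨G, g', rfl⟩ := hC2
    have hRm : MeasurableSet R := hR
    have hCm := measurableSet_cyl19 (Γ := Γ) F f
    have hC'm := measurableSet_cyl19 (Γ := Γ) G g'
    -- the decomposition of the preimage
    have hdecomp : Ψ ⁻¹' (R ×ˢ (cyl19 F f ×ˢ cyl19 G g')) =
        ⋃ g : Γ, ((logicAct g⁻¹) ⁻¹' R) ×ˢ
          ((cons19 g⁻¹ ⁻¹' cyl19 F f) ×ˢ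
            ({η : ℕ → Γ | η 0 = g} ∩ (fun (η : ℕ → Γ) (n : ℕ) => η (n + 1)) ⁻¹' cyl19 G g')) := by
      ext ⟨E, ξ, η⟩
      simp only [Set.mem_preimage, Set.mem_prod, Set.mem_iUnion, Set.mem_inter_iff,
        Set.mem_setOf_eq, hΨdef]
      constructor
      · rintro ⟨h1, h2, h3⟩; exact ⟨η 0, h1, h2, rfl, h3⟩
      · rintro ⟨g, h1, h2, hg, h3⟩; subst hg; exact ⟨h1, h2, h3⟩
    have htailm : Measurable (fun (η : ℕ → Γ) (n : ℕ) => η (n + 1)) :=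
      measurable_pi_lambda _ fun n => measurable_pi_apply (n + 1)
    have hDgm : ∀ g : Γ, MeasurableSet
        ({η : ℕ → Γ | η 0 = g} ∩ (fun (η : ℕ → Γ) (n : ℕ) => η (n + 1)) ⁻¹' cyl19 G g') := by
      intro g
      have hset : {η : ℕ → Γ | η 0 = g} = (fun η : ℕ → Γ => η 0) ⁻¹' {g} := rfl
      rw [hset]
      exact (measurable_pi_apply 0 (measurableSet_singleton g)).inter (htailm hC'm)
    rw [Measure.map_apply hΨ (hRm.prod (hCm.prod hC'm)), hdecomp,
      measure_iUnion
        (fun i j hij => Set.disjoint_left.mpr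
          (fun p hi hj => hij (hi.2.2.1.symm.trans hj.2.2.1)))
        (fun g => ((measurable_logicAct g⁻¹) hRm).prod
          (((measurable_cons19 g⁻¹) hCm).prod (hDgm g)))]
    -- value of each slice
    have hνg : ∀ g : Γ, ν ((logicAct g⁻¹) ⁻¹' R) = ν R := by
      intro g
      conv_rhs => rw [← hν g⁻¹]
      rw [Measure.map_apply (measurable_logicAct g⁻¹) hRm]
    have hDg : ∀ g : Γ,
        ({η : ℕ → Γ | η 0 = g} ∩ (fun (η : ℕ → Γ) (n : ℕ) => η (n + 1)) ⁻¹' cyl19 G g')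
          = cyl19 (insert 0 (G.image (fun n => n + 1))) (cons19 g g') := by
      intro g
      ext η
      simp only [cyl19, Set.mem_inter_iff, Set.mem_setOf_eq, Set.mem_preimage,
        Finset.mem_insert, Finset.mem_image]
      constructor
      · rintro ⟨h0, hG⟩ n hn
        rcases hn with rfl | ⟨m, hm, rfl⟩
        · exact h0
        · exact hG m hm
      · intro h
        exact ⟨h 0 (Or.inl rfl), fun n hn => h (n + 1) (Or.inr ⟨n, hn, rfl⟩)⟩
    have hκD : ∀ g : Γ,
        κ ({η : ℕ → Γ | η 0 = g} ∩ (fun (η : ℕ → Γ) (n : ℕ) => η (n + 1)) ⁻¹' cyl19 G g')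
          = μ {g} * ∏ n ∈ G, μ {g' n} := by
      intro g
      rw [hDg g, hκ', Finset.prod_insert (by simp)]
      congr 1
      rw [Finset.prod_image (fun a _ b _ (h : a + 1 = b + 1) => by omega)]
      exact Finset.prod_congr rfl fun n _ => rfl
    have hterm : ∀ g : Γ,
        Λ (((logicAct g⁻¹) ⁻¹' R) ×ˢ
          ((cons19 g⁻¹ ⁻¹' cyl19 F f) ×ˢ
            ({η : ℕ → Γ | η 0 = g} ∩ (fun (η : ℕ → Γ) (n : ℕ) => η (n + 1)) ⁻¹' cyl19 G g')))
        = ν R * (κ (cons19 g⁻¹ ⁻¹' cyl19 F f) * (μ {g} * ∏ n ∈ G, μ {g' n})) := by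
      intro g
      rw [hΛ, Measure.prod_prod, hm2, Measure.prod_prod, hνg g, hκD g]
    rw [tsum_congr hterm]
    -- the RHS
    have hRHS : Λ (R ×ˢ (cyl19 F f ×ˢ cyl19 G g'))
        = ν R * ((∏ n ∈ F, μ {f n}) * ∏ n ∈ G, μ {g' n}) := by
      rw [hΛ, Measure.prod_prod, hm2, Measure.prod_prod, hκ', hκ']
    rw [hRHS]
    -- computing the preimage cylinders
    have hconsPre : ∀ γ : Γ, (0 ∉ F ∨ γ = f 0) →
        cons19 γ ⁻¹' cyl19 F f = cyl19 ((F.erase 0).image (fun k => k - 1)) (fun n => f (n + 1)) := by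
      intro γ hγ
      ext ξ
      simp only [cyl19, Set.mem_preimage, Set.mem_setOf_eq, Finset.mem_image, Finset.mem_erase]
      constructor
      · rintro h m ⟨k, ⟨hk0, hkF⟩, rfl⟩
        obtain ⟨m', rfl⟩ : ∃ m', k = m' + 1 := ⟨k - 1, by omega⟩
        exact h (m' + 1) hkF
      · intro h n hn
        match n with
        | 0 =>
          rcases hγ with h0 | rfl
          · exact absurd hn h0
          · rfl
        | m + 1 =>
          exact h m ⟨m + 1, ⟨by omega, hn⟩, by omega⟩
    have hκcons : ∀ γ : Γ, (0 ∉ F ∨ γ = f 0) →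
        κ (cons19 γ ⁻¹' cyl19 F f) = ∏ k ∈ F.erase 0, μ {f k} := by
      intro γ hγ
      rw [hconsPre γ hγ, hκ',
        Finset.prod_image (fun a ha b hb h => by
          simp only [Finset.mem_coe, Finset.mem_erase] at ha hb; omega)]
      refine Finset.prod_congr rfl fun k hk => ?_
      have hk0 : k ≠ 0 := (Finset.mem_erase.mp hk).1
      have : k - 1 + 1 = k := by omega
      rw [this]
    by_cases h0 : 0 ∈ F
    · -- only g = (f 0)⁻¹ contributes
      rw [tsum_eq_single (f 0)⁻¹ ?_]
      · rw [hκcons (f 0)⁻¹⁻¹ (Or.inr (inv_inv (f 0))), ← hsym (f 0)]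
        calc ν R * ((∏ k ∈ F.erase 0, μ {f k}) * (μ {f 0} * ∏ n ∈ G, μ {g' n}))
            = ν R * (((∏ k ∈ F.erase 0, μ {f k}) * μ {f 0}) * ∏ n ∈ G, μ {g' n}) := by ring
          _ = ν R * ((∏ n ∈ F, μ {f n}) * ∏ n ∈ G, μ {g' n}) := by
              rw [Finset.prod_erase_mul _ _ h0]
      · intro g hg
        have hempty : cons19 g⁻¹ ⁻¹' cyl19 F f = ∅ := by
          rw [Set.eq_empty_iff_forall_notMem]
          intro ξ hξ
          have : cons19 g⁻¹ ξ 0 = f 0 := hξ 0 h0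
          have hg' : g⁻¹ = f 0 := this
          exact hg (by rw [← hg', inv_inv])
        rw [hempty]
        simp
    · -- all g contribute equally
      have hFe : F.erase 0 = F := Finset.erase_eq_of_notMem h0
      have hterm2 : ∀ g : Γ,
          ν R * (κ (cons19 g⁻¹ ⁻¹' cyl19 F f) * (μ {g} * ∏ n ∈ G, μ {g' n}))
            = (ν R * ((∏ n ∈ F, μ {f n}) * ∏ n ∈ G, μ {g' n})) * μ {g} := by
        intro g
        rw [hκcons g⁻¹ (Or.inl h0), hFe]
        ring
      rw [tsum_congr hterm2, ENNReal.tsum_mul_left, htsum1, mul_one]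
  -- assemble everything
  set B := (Prod.map id T) ⁻¹' A with hB
  have hBm : MeasurableSet B := (measurable_id.prodMap hT) hA
  have hkey : (Prod.map id T) ⁻¹'
      ((fun p : (Γ × Γ → Bool) × (ℤ → Γ) => (p.1, fun n : ℤ => p.2 (n - 1))) ⁻¹' A)
      = Ψ ⁻¹' B := by
    ext ⟨E, q⟩
    obtain ⟨ξ, η⟩ := q
    simp only [Set.mem_preimage]
    have hpt : ((logicAct (η 0)⁻¹ E, fun n : ℤ => (η 0)⁻¹ * twoSided ξ η (n - 1)) :
          (Γ × Γ → Bool) × (ℤ → Γ))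
        = Prod.map id T (Ψ (E, (ξ, η))) := by
      refine Prod.ext rfl ?_
      funext n
      exact twoSided_shift19 ξ η n
    constructor
    · intro h
      have h2 : ((E : Γ × Γ → Bool), fun n : ℤ => twoSided ξ η (n - 1)) ∈
          (fun p : (Γ × Γ → Bool) × (ℤ → Γ) =>
            (logicAct (η 0)⁻¹ p.1, fun n => (η 0)⁻¹ * p.2 n)) ⁻¹' A := by
        rw [hinv (η 0)⁻¹]
        exact h
      have h2b : ((logicAct (η 0)⁻¹ E, fun n : ℤ => (η 0)⁻¹ * twoSided ξ η (n - 1)) :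
          (Γ × Γ → Bool) × (ℤ → Γ)) ∈ A := h2
      rw [hpt] at h2b
      exact h2b
    · intro h
      have h3 : Prod.map id T (Ψ (E, (ξ, η))) ∈ A := h
      have h4 : ((logicAct (η 0)⁻¹ E, fun n : ℤ => (η 0)⁻¹ * twoSided ξ η (n - 1)) :
          (Γ × Γ → Bool) × (ℤ → Γ)) ∈ A := by
        rw [hpt]; exact h3
      have h2 : ((E : Γ × Γ → Bool), fun n : ℤ => twoSided ξ η (n - 1)) ∈
          (fun p : (Γ × Γ → Bool) × (ℤ → Γ) =>
            (logicAct (η 0)⁻¹ p.1, fun n => (η 0)⁻¹ * p.2 n)) ⁻¹' A := h4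
      rw [hinv (η 0)⁻¹] at h2
      exact h2
  calc (ν.prod (Measure.map T m2))
        ((fun p : (Γ × Γ → Bool) × (ℤ → Γ) => (p.1, fun n => p.2 (n + 1))) '' A)
      = (Measure.map (Prod.map id T) Λ)
          ((fun p : (Γ × Γ → Bool) × (ℤ → Γ) => (p.1, fun n : ℤ => p.2 (n - 1))) ⁻¹' A) := by
        rw [hmeas_eq, himg]
    _ = Λ ((Prod.map id T) ⁻¹'
          ((fun p : (Γ × Γ → Bool) × (ℤ → Γ) => (p.1, fun n : ℤ => p.2 (n - 1))) ⁻¹' A)) :=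
        Measure.map_apply (measurable_id.prodMap hT) (hShInv hA)
    _ = Λ (Ψ ⁻¹' B) := by rw [hkey]
    _ = (Measure.map Ψ Λ) B := (Measure.map_apply hΨ hBm).symm
    _ = Λ B := by rw [hmapΨ]
    _ = (Measure.map (Prod.map id T) Λ) A :=
        (Measure.map_apply (measurable_id.prodMap hT) hA).symm
    _ = (ν.prod (Measure.map T m2)) A := by rw [hmeas_eq]
end
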